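/- Let δ be an integer, λ a partition with at most n parts, and set ρ_n(δ) = (δ, -1, -2, ..., -n) ∈ ℝ^{n+1} and λ̂ = (-|λ|, λ_1, ..., λ_n). If (μ, λ') is a δ-pair obtained by adding a strip in row i to μ = λ, then λ̂' = s_{0,i} ·_δ λ̂, where s_{0,i} is the reflection swapping coordinates 0 and i and w ·_δ x = w(x + ρ_n(δ)) - ρ_n(δ). -/

import Mathlib

def IsPartWithin (n : ℕ) (f : ℕ → ℕ) : Prop :=
  (∀ i j, i ≤ j → f j ≤ f i) ∧ ∀ i, n ≤ i → f i = 0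

def psize (n : ℕ) (f : ℕ → ℕ) : ℕ := ∑ i ∈ Finset.range n, f i

/-- `λ̂ = (-|λ|, λ_1, …, λ_n) ∈ ℤ^{n+1}` (coordinates indexed by `{0,…,n}`). -/
def hatP (n : ℕ) (f : ℕ → ℕ) : Fin (n + 1) → ℤ :=
  fun m => if (m : ℕ) = 0 then -(psize n f : ℤ) else (f ((m : ℕ) - 1) : ℤ)

/-- `ρ_n(δ) = (δ, -1, -2, …, -n)`. -/
def rhoP (n : ℕ) (δ : ℤ) : Fin (n + 1) → ℤ :=
  fun m => if (m : ℕ) = 0 then δ else -((m : ℕ) : ℤ)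

/-- if `(λ, λ')` is a `δ`-pair obtained by adding a strip in row `i`
(1-indexed) to `λ`, then `λ̂' = s_{0,i} ·_δ λ̂`, where `s_{0,i}` swaps coordinates `0`
and `i` and `w ·_δ x = w(x + ρ_n(δ)) - ρ_n(δ)` (note `s_{0,i}` is an involution, so
`(s_{0,i} y)(m) = y(s_{0,i} m)`). -/
theorem delta_pair_is_reflection (n : ℕ) (δ : ℤ) (i : ℕ) (hi1 : 1 ≤ i) (hin : i ≤ n)
    (lam lam' : ℕ → ℕ) (h1 : IsPartWithin n lam) (h2 : IsPartWithin n lam')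
    (hrow : ∀ j, j ≠ i - 1 → lam' j = lam j)
    (hlt : lam (i - 1) < lam' (i - 1))
    (hcont : (lam' (i - 1) : ℤ) - i = δ - psize n lam) :
    ∀ m : Fin (n + 1),
      hatP n lam' m
        = (hatP n lam + rhoP n δ) (Equiv.swap (0 : Fin (n + 1)) ⟨i, by omega⟩ m)
            - rhoP n δ m := by
  have hsum : (psize n lam' : ℤ) = (psize n lam : ℤ) + lam' (i-1) - lam (i-1) := by
    have key : ∀ j ∈ Finset.range n, (lam' j : ℤ) - lam j
        = if j = i - 1 then (lam' (i-1) : ℤ) - lam (i-1) else 0 := by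
      intro j hj
      by_cases h : j = i - 1
      · simp [h]
      · simp [h, hrow j h]
    have := Finset.sum_congr rfl key
    rw [Finset.sum_sub_distrib] at this
    rw [Finset.sum_ite_eq' (Finset.range n) (i-1)] at this
    have hmem : i - 1 ∈ Finset.range n := Finset.mem_range.mpr (by omega)
    simp [hmem] at this
    unfold psize
    push_cast
    omega
  intro m
  rcases eq_or_ne m 0 with rfl | hm0
  · rw [Equiv.swap_apply_left]
    simp only [hatP, rhoP, Pi.add_apply]
    have : ¬ (i = 0) := by omega
    simp only [Fin.val_mk, Fin.val_zero, this, if_false, if_true]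
    omega
  rcases eq_or_ne m ⟨i, by omega⟩ with rfl | hmI
  · rw [Equiv.swap_apply_right]
    simp only [hatP, rhoP, Pi.add_apply]
    have : ¬ (i = 0) := by omega
    simp only [Fin.val_mk, Fin.val_zero, this, if_false, if_true]
    omega
  · rw [Equiv.swap_apply_of_ne_of_ne hm0 hmI]
    have hne0 : (m : ℕ) ≠ 0 := fun h => hm0 (Fin.ext h)
    have hnei : (m : ℕ) ≠ i := fun h => hmI (Fin.ext h)
    simp only [hatP, rhoP, Pi.add_apply, hne0, if_false]
    rw [hrow ((m : ℕ) - 1) (by omega)]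
    ring
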